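/- Let {Gₙ} be a sequence of topological groups each of which embeds as a closed topological subgroup of the unitary group (with strong operator topology) of a finite von Neumann algebra, and suppose each Gₙ is Polish. Then the projective limit G = lim← Gₙ of a projective system with continuous connecting homomorphisms jₘₙ : Gₘ → Gₙ (n ≤ m) also embeds as a closed subgroup of the unitary group of a finite von Neumann algebra. -/

import Mathlib

noncomputable section
open Topology
open scoped ENNReal
set_option linter.unusedSectionVars false
namespace PLAux

variable {E : ℕ → Type} [∀ n, NormedAddCommGroup (E n)] [∀ n, InnerProductSpace ℂ (E n)]
  [∀ n, CompleteSpace (E n)]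

local notation "⟪" x ", " y "⟫" => @inner ℂ _ _ x y

example : Fact ((1:ℝ≥0∞) ≤ 2) := inferInstance
example : CompleteSpace (lp E 2) := inferInstance
example : InnerProductSpace ℂ (lp E 2) := inferInstance

/-- coordinate evaluation as a continuous linear map -/
def evalCLM (n : ℕ) : lp E 2 →L[ℂ] E n :=
  LinearMap.mkContinuous
    { toFun := fun f => f n
      map_add' := fun f g => rfl
      map_smul' := fun c f => rfl }
    1 (fun f => by rw [one_mul]; exact lp.norm_apply_le_norm (by norm_num) f n)

@[simp] lemma evalCLM_apply (n : ℕ) (f : lp E 2) : evalCLM n f = f n := rfl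

/-- coordinate inclusion as a continuous linear map -/
def singleCLM (n : ℕ) : E n →L[ℂ] lp E 2 :=
  LinearMap.mkContinuous
    { toFun := fun a => lp.single 2 n a
      map_add' := fun a b => by
        refine lp.ext (funext fun m => ?_)
        rcases eq_or_ne m n with rfl | h
        · simp [lp.single_apply_self, lp.coeFn_add]
        · simp [lp.single_apply_ne _ _ _ h, lp.coeFn_add]
      map_smul' := fun c a => by simp }
    1 (fun a => by
      have h := lp.norm_single (p := 2) (E := E) (by norm_num) n (lp.single 2 n a n)
      rw [lp.single_apply_self] at h
      rw [one_mul]; exact h.le)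

@[simp] lemma singleCLM_apply (n : ℕ) (a : E n) : singleCLM n a = lp.single 2 n a := rfl


/-- `a` acting on the `n`-th summand, zero elsewhere. -/
def emb (n : ℕ) (a : E n →L[ℂ] E n) : lp E 2 →L[ℂ] lp E 2 :=
  (singleCLM n).comp (a.comp (evalCLM n))

@[simp] lemma emb_apply (n : ℕ) (a : E n →L[ℂ] E n) (f : lp E 2) :
    emb n a f = lp.single 2 n (a (f n)) := rfl

/-- the `n`-th diagonal block of an operator on the Hilbert sum -/
def blockOf (x : lp E 2 →L[ℂ] lp E 2) (n : ℕ) : E n →L[ℂ] E n :=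
  (evalCLM n).comp (x.comp (singleCLM n))

@[simp] lemma blockOf_apply (x : lp E 2 →L[ℂ] lp E 2) (n : ℕ) (w : E n) :
    blockOf x n w = (x (lp.single 2 n w)) n := rfl

lemma star_emb (n : ℕ) (a : E n →L[ℂ] E n) : star (emb n a) = emb n (star a) := by
  rw [ContinuousLinearMap.star_eq_adjoint, ContinuousLinearMap.star_eq_adjoint]
  symm
  rw [ContinuousLinearMap.eq_adjoint_iff]
  intro f g
  rw [emb_apply, emb_apply, lp.inner_single_left, lp.inner_single_right,
    ContinuousLinearMap.adjoint_inner_left]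

lemma blockOf_star (x : lp E 2 →L[ℂ] lp E 2) (n : ℕ) :
    blockOf (star x) n = star (blockOf x n) := by
  rw [ContinuousLinearMap.star_eq_adjoint, ContinuousLinearMap.star_eq_adjoint]
  rw [ContinuousLinearMap.eq_adjoint_iff]
  intro v w
  calc ⟪blockOf ((ContinuousLinearMap.adjoint x)) n v, w⟫
      = ⟪(ContinuousLinearMap.adjoint x) (lp.single 2 n v), lp.single 2 n w⟫ := by
        rw [blockOf_apply, lp.inner_single_right]
    _ = ⟪lp.single 2 n v, x (lp.single 2 n w)⟫ := by
        rw [ContinuousLinearMap.adjoint_inner_left]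
    _ = ⟪v, blockOf x n w⟫ := by rw [blockOf_apply, lp.inner_single_left]

lemma blockOf_one (n : ℕ) : blockOf (1 : lp E 2 →L[ℂ] lp E 2) n = 1 := by
  ext w
  simp [lp.single_apply_self]

variable (N : ∀ n, VonNeumannAlgebra (E n))

/-- the generating set whose commutant is the product von Neumann algebra -/
def bigS : Set (lp E 2 →L[ℂ] lp E 2) :=
  ⋃ n, (emb n) '' (Set.centralizer (N n : Set (E n →L[ℂ] E n)))

/-- the product von Neumann algebra, as the commutant of `bigS` -/
def bigM : VonNeumannAlgebra (lp E 2) where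
  toStarSubalgebra := StarSubalgebra.centralizer ℂ (bigS N)
  centralizer_centralizer' := by
    exact Set.centralizer_centralizer_centralizer _

lemma mem_bigM_iff {x : lp E 2 →L[ℂ] lp E 2} :
    x ∈ bigM N ↔ ∀ (n : ℕ) (a : E n →L[ℂ] E n),
      a ∈ Set.centralizer (N n : Set (E n →L[ℂ] E n)) → emb n a * x = x * emb n a := by
  constructor
  · intro hx n a ha
    have := (StarSubalgebra.mem_centralizer_iff ℂ).mp hx (emb n a)
      (Set.mem_iUnion.mpr ⟨n, Set.mem_image_of_mem _ ha⟩)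
    exact this.1
  · intro h
    rw [show (x ∈ bigM N) = (x ∈ StarSubalgebra.centralizer ℂ (bigS N)) from rfl,
      StarSubalgebra.mem_centralizer_iff]
    intro g hg
    obtain ⟨n, a, ha, rfl⟩ := Set.mem_iUnion.mp hg
    refine ⟨h n a ha, ?_⟩
    rw [star_emb]
    refine h n (star a) ?_
    intro m hm
    have h1 : star m ∈ (N n : Set (E n →L[ℂ] E n)) := star_mem hm
    have := congrArg star (ha (star m) h1)
    simpa [star_mul] using this.symm


variable {N}

lemma apply_eq_blockOf {x : lp E 2 →L[ℂ] lp E 2} (hx : x ∈ bigM N) (f : lp E 2) (n : ℕ) :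
    (x f) n = blockOf x n (f n) := by
  have h1 : (1 : E n →L[ℂ] E n) ∈ Set.centralizer (N n : Set (E n →L[ℂ] E n)) :=
    Set.mem_centralizer_iff.mpr fun m _ => by rw [mul_one, one_mul]
  have := (mem_bigM_iff N).mp hx n 1 h1
  have h2 := congrArg (fun y : lp E 2 →L[ℂ] lp E 2 => (y f) n) this
  simpa [lp.single_apply_self] using h2

lemma blockOf_mem {x : lp E 2 →L[ℂ] lp E 2} (hx : x ∈ bigM N) (n : ℕ) :
    blockOf x n ∈ N n := by
  rw [← SetLike.mem_coe, ← (N n).centralizer_centralizer]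
  refine Set.mem_centralizer_iff.mpr fun a ha => ?_
  ext w
  have hc := (mem_bigM_iff N).mp hx n a ha
  have h2 := congrArg (fun y : lp E 2 →L[ℂ] lp E 2 => (y (lp.single 2 n w)) n) hc
  simp only [ContinuousLinearMap.mul_apply, emb_apply, lp.single_apply_self] at h2
  simpa [lp.single_apply_self] using h2

lemma blockOf_mul {x : lp E 2 →L[ℂ] lp E 2} (hx : x ∈ bigM N)
    (y : lp E 2 →L[ℂ] lp E 2) (n : ℕ) :
    blockOf (x * y) n = blockOf x n * blockOf y n := by
  ext w
  simp only [ContinuousLinearMap.mul_apply, blockOf_apply]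
  exact apply_eq_blockOf hx (y (lp.single 2 n w)) n

lemma eq_of_blockOf {x y : lp E 2 →L[ℂ] lp E 2} (hx : x ∈ bigM N) (hy : y ∈ bigM N)
    (h : ∀ n, blockOf x n = blockOf y n) : x = y := by
  ext f n
  exact (apply_eq_blockOf hx f n).trans (by rw [h n, ← apply_eq_blockOf hy f n])

/-- the product of finite von Neumann algebras is finite -/
lemma bigM_finite
    (hfinN : ∀ n, ∀ a : E n →L[ℂ] E n, a ∈ N n → star a * a = 1 → a * star a = 1)
    (x : lp E 2 →L[ℂ] lp E 2) (hx : x ∈ bigM N) (hiso : star x * x = 1) :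
    x * star x = 1 := by
  have hsx : star x ∈ bigM N := star_mem hx
  have hxsx : x * star x ∈ bigM N := mul_mem hx hsx
  have h1 : (1 : lp E 2 →L[ℂ] lp E 2) ∈ bigM N := one_mem _
  refine eq_of_blockOf hxsx h1 fun n => ?_
  have hb : star (blockOf x n) * blockOf x n = 1 := by
    have := blockOf_mul hsx x n
    rw [hiso, blockOf_one, blockOf_star] at this
    exact this.symm
  have := hfinN n (blockOf x n) (blockOf_mem hx n) hb
  rw [blockOf_mul hx (star x) n, blockOf_star, this, blockOf_one]


section Block

variable {F : Type} [NormedAddCommGroup F] [InnerProductSpace ℂ F] [CompleteSpace F]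

lemma norm_apply_of_unitary {u : F →L[ℂ] F} (h : star u * u = 1) (w : F) : ‖u w‖ = ‖w‖ := by
  have h1 : ⟪u w, u w⟫ = ⟪w, w⟫ := by
    rw [ContinuousLinearMap.star_eq_adjoint] at h
    calc ⟪u w, u w⟫ = ⟪(ContinuousLinearMap.adjoint u) (u w), w⟫ := by
          rw [ContinuousLinearMap.adjoint_inner_left]
      _ = ⟪w, w⟫ := by
          rw [show (ContinuousLinearMap.adjoint u) (u w)
              = ((ContinuousLinearMap.adjoint u) * u) w from rfl, h,
            ContinuousLinearMap.one_apply]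
  rw [norm_eq_sqrt_re_inner (𝕜 := ℂ) (u w), norm_eq_sqrt_re_inner (𝕜 := ℂ) w, h1]

variable {T : ∀ n, E n →L[ℂ] E n}

lemma block_memℓp (hT : ∀ n w, ‖T n w‖ = ‖w‖) (f : lp E 2) :
    Memℓp (fun n => T n (f n)) 2 := by
  apply memℓp_gen
  exact ((lp.memℓp f).summable (by norm_num)).congr fun n => by rw [hT n (f n)]

/-- block-diagonal operator built from a norm-preserving family -/
def blockU (T : ∀ n, E n →L[ℂ] E n) (hT : ∀ n w, ‖T n w‖ = ‖w‖) : lp E 2 →L[ℂ] lp E 2 :=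
  LinearMap.mkContinuous
    { toFun := fun f => (⟨fun n => T n (f n), block_memℓp hT f⟩ : lp E 2)
      map_add' := fun f g => lp.ext (funext fun n => by
        show T n ((f + g : lp E 2) n) = _
        rw [lp.coeFn_add]
        exact map_add (T n) (f n) (g n))
      map_smul' := fun c f => lp.ext (funext fun n => by
        show T n ((c • f : lp E 2) n) = _
        rw [lp.coeFn_smul]
        exact map_smul (T n) c (f n)) }
    1 (fun f => by
      rw [one_mul]
      refine le_of_eq ?_
      rw [lp.norm_eq_tsum_rpow (by norm_num) , lp.norm_eq_tsum_rpow (by norm_num) f]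
      congr 1
      exact tsum_congr fun n => by
        show ‖T n (f n)‖ ^ ENNReal.toReal 2 = ‖f n‖ ^ ENNReal.toReal 2
        rw [hT n (f n)])

@[simp] lemma blockU_apply (hT : ∀ n w, ‖T n w‖ = ‖w‖) (f : lp E 2) (n : ℕ) :
    (blockU T hT f) n = T n (f n) := rfl

lemma blockU_norm (hT : ∀ n w, ‖T n w‖ = ‖w‖) (f : lp E 2) : ‖blockU T hT f‖ = ‖f‖ := by
  rw [lp.norm_eq_tsum_rpow (by norm_num), lp.norm_eq_tsum_rpow (by norm_num) f]
  congr 1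
  exact tsum_congr fun n => by rw [blockU_apply, hT n (f n)]

lemma blockU_single (hT : ∀ n w, ‖T n w‖ = ‖w‖) (n : ℕ) (w : E n) :
    blockU T hT (lp.single 2 n w) = lp.single 2 n (T n w) := by
  apply lp.ext
  funext k
  rcases eq_or_ne k n with rfl | h
  · rw [blockU_apply, lp.single_apply_self, lp.single_apply_self]
  · rw [blockU_apply, lp.single_apply_ne _ _ _ h, lp.single_apply_ne _ _ _ h, map_zero]

lemma blockOf_blockU (hT : ∀ n w, ‖T n w‖ = ‖w‖) (n : ℕ) :
    blockOf (blockU T hT) n = T n := by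
  ext w
  rw [blockOf_apply, blockU_single, lp.single_apply_self]

lemma blockU_mul {T' : ∀ n, E n →L[ℂ] E n} (hT : ∀ n w, ‖T n w‖ = ‖w‖)
    (hT' : ∀ n w, ‖T' n w‖ = ‖w‖) :
    blockU T hT * blockU T' hT' =
      blockU (fun n => T n * T' n) (fun n w => by
        rw [ContinuousLinearMap.mul_apply, hT, hT']) := by
  ext f n
  rfl

lemma blockU_one : blockU (fun n => (1 : E n →L[ℂ] E n)) (fun n w => rfl) = 1 := by
  ext f n
  rfl

lemma blockU_congr {T' : ∀ n, E n →L[ℂ] E n} (hT : ∀ n w, ‖T n w‖ = ‖w‖) (h : T = T') :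
    blockU T hT = blockU T' (h ▸ hT) := by subst h; rfl

lemma blockU_star (hT : ∀ n w, ‖T n w‖ = ‖w‖)
    (hT' : ∀ n w, ‖star (T n) w‖ = ‖w‖) :
    star (blockU T hT) = blockU (fun n => star (T n)) hT' := by
  rw [ContinuousLinearMap.star_eq_adjoint]
  symm
  rw [ContinuousLinearMap.eq_adjoint_iff]
  intro f g
  rw [lp.inner_eq_tsum, lp.inner_eq_tsum]
  refine tsum_congr fun n => ?_
  rw [blockU_apply, blockU_apply, ContinuousLinearMap.star_eq_adjoint,
    ContinuousLinearMap.adjoint_inner_left]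

lemma blockU_mem (hT : ∀ n w, ‖T n w‖ = ‖w‖) (hTN : ∀ n, T n ∈ N n) :
    blockU T hT ∈ bigM N := by
  rw [mem_bigM_iff]
  intro n a ha
  ext f k
  show (emb n a (blockU T hT f) : ∀ m, E m) k = (blockU T hT (emb n a f) : ∀ m, E m) k
  rcases eq_or_ne k n with rfl | h
  · rw [emb_apply, lp.single_apply_self, blockU_apply, blockU_apply, emb_apply,
      lp.single_apply_self]
    exact (DFunLike.congr_fun (ha (T k) (hTN k)) (f k)).symm
  · rw [emb_apply, lp.single_apply_ne _ _ _ h, blockU_apply, emb_apply,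
      lp.single_apply_ne _ _ _ h, map_zero]

end Block

end PLAux

/-- A witness that the topological group `G` embeds as a closed topological subgroup of
the unitary group (with the strong operator topology) of a finite von Neumann algebra
`M` acting on a Hilbert space `H`.  The strong operator topology on bounded operators
is the topology induced from the product topology on `H → H` via `u ↦ ⇑u`. -/
structure FiniteTypeWitness (G : Type*) [TopologicalSpace G] [Group G] where
  H : Type
  [nacg : NormedAddCommGroup H]
  [ips : InnerProductSpace ℂ H]
  [cs : CompleteSpace H]
  M : VonNeumannAlgebra H
  /-- `M` is a finite von Neumann algebra: every isometry in `M` is a unitary. -/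
  finite : ∀ x : H →L[ℂ] H, x ∈ M → star x * x = 1 → x * star x = 1
  /-- the embedding, a continuous injective homomorphism into the unitaries of `M` -/
  π : G →* (H →L[ℂ] H)
  mem : ∀ g : G, π g ∈ M
  unitary : ∀ g : G, π g ∈ unitary (H →L[ℂ] H)
  /-- `π` is a homeomorphism onto its image for the strong operator topology -/
  hembedding : Topology.IsEmbedding fun g : G => (⇑(π g) : H → H)
  /-- the image of `π` is closed in the unitary group of `M` (strong operator topology) -/
  closed : IsClosed {p : {fn : H → H // ∃ u : H →L[ℂ] H, u ∈ M ∧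
      u ∈ _root_.unitary (H →L[ℂ] H) ∧ ⇑u = fn} | ∃ g : G, (⇑(π g) : H → H) = ↑p}

/-- A topological group is of finite type if it embeds as a closed subgroup of the
unitary group of a finite von Neumann algebra. -/
def IsFiniteTypeGroup (G : Type*) [TopologicalSpace G] [Group G] : Prop :=
  Nonempty (FiniteTypeWitness G)

/-- The projective limit of a projective system of Polish groups of finite type (with
continuous connecting homomorphisms) — realized as the closed subgroup
`{x ∈ ∏ₙ Gₙ : jₘₙ(xₘ) = xₙ for n ≤ m}` of the direct product — is of finite type. -/
theorem stmt_18 (G : ℕ → Type*) [∀ n, TopologicalSpace (G n)] [∀ n, Group (G n)]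
    [∀ n, IsTopologicalGroup (G n)] [∀ n, PolishSpace (G n)]
    (hfin : ∀ n, IsFiniteTypeGroup (G n))
    (j : ∀ ⦃n m : ℕ⦄, n ≤ m → (G m →* G n))
    (hcont : ∀ (n m : ℕ) (h : n ≤ m), Continuous (j h))
    (hrefl : ∀ n : ℕ, j (le_refl n) = MonoidHom.id (G n))
    (htrans : ∀ (n m k : ℕ) (hnm : n ≤ m) (hmk : m ≤ k),
      (j hnm).comp (j hmk) = j (hnm.trans hmk)) :
    ∃ Γ : Subgroup (∀ n, G n),
      (Γ : Set (∀ n, G n)) = {x | ∀ (n m : ℕ) (h : n ≤ m), j h (x m) = x n} ∧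
      IsFiniteTypeGroup Γ := by
  classical
  refine ⟨{ carrier := {x | ∀ (n m : ℕ) (h : n ≤ m), j h (x m) = x n}
            one_mem' := fun n m h => by simp
            mul_mem' := fun {a b} ha hb n m h => by
              simp only [Pi.mul_apply, map_mul, ha n m h, hb n m h]
            inv_mem' := fun {a} ha n m h => by
              simp only [Pi.inv_apply, map_inv, ha n m h] }, rfl, ?_⟩
  set Γ : Subgroup (∀ n, G n) :=
    { carrier := {x | ∀ (n m : ℕ) (h : n ≤ m), j h (x m) = x n}
      one_mem' := fun n m h => by simp
      mul_mem' := fun {a b} ha hb n m h => by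
        simp only [Pi.mul_apply, map_mul, ha n m h, hb n m h]
      inv_mem' := fun {a} ha n m h => by
        simp only [Pi.inv_apply, map_inv, ha n m h] } with hΓ
  set W : ∀ n, FiniteTypeWitness (G n) := fun n => (hfin n).some with hW
  set E : ℕ → Type := fun n => (W n).H with hE
  letI : ∀ n, NormedAddCommGroup (E n) := fun n => (W n).nacg
  letI : ∀ n, InnerProductSpace ℂ (E n) := fun n => (W n).ips
  letI : ∀ n, CompleteSpace (E n) := fun n => (W n).cs
  set N : ∀ n, VonNeumannAlgebra (E n) := fun n => (W n).M with hN
  -- the family of unitaries attached to an element of the projective limit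
  set T : Γ → ∀ n, E n →L[ℂ] E n := fun g n => (W n).π (g.1 n) with hT
  have hU : ∀ (g : Γ) (n : ℕ), star (T g n) * T g n = 1 ∧ T g n * star (T g n) = 1 :=
    fun g n => Unitary.mem_iff.mp ((W n).unitary (g.1 n))
  have hiso : ∀ (g : Γ) (n : ℕ) (w : E n), ‖T g n w‖ = ‖w‖ :=
    fun g n w => PLAux.norm_apply_of_unitary (hU g n).1 w
  have hisos : ∀ (g : Γ) (n : ℕ) (w : E n), ‖star (T g n) w‖ = ‖w‖ := fun g n w =>
    PLAux.norm_apply_of_unitary (by rw [star_star]; exact (hU g n).2) w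
  set Bk : Γ → (lp E 2 →L[ℂ] lp E 2) := fun g => PLAux.blockU (T g) (hiso g) with hBk
  have hBkmul : ∀ g g' : Γ, Bk (g * g') = Bk g * Bk g' := by
    intro g g'
    rw [PLAux.blockU_mul (hiso g) (hiso g')]
    refine (PLAux.blockU_congr _ ?_).symm
    funext n
    show (W n).π (g.1 n) * (W n).π (g'.1 n) = (W n).π ((g * g').1 n)
    rw [← map_mul]
    rfl
  have hBkone : Bk 1 = 1 := by
    rw [show Bk 1 = PLAux.blockU (T 1) (hiso 1) from rfl,
      PLAux.blockU_congr (hiso 1) (funext fun n => show (W n).π ((1 : Γ).1 n) = 1 by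
        rw [show (1 : Γ).1 n = 1 from rfl, map_one]), PLAux.blockU_one]
  have hBkstar : ∀ g : Γ, star (Bk g) = PLAux.blockU (fun n => star (T g n)) (hisos g) :=
    fun g => PLAux.blockU_star (hiso g) (hisos g)
  have hBkunit : ∀ g : Γ, Bk g ∈ unitary (lp E 2 →L[ℂ] lp E 2) := by
    intro g
    rw [Unitary.mem_iff, hBkstar g]
    constructor
    · rw [PLAux.blockU_mul, PLAux.blockU_congr _ (funext fun n => (hU g n).1),
        PLAux.blockU_one]
    · rw [PLAux.blockU_mul, PLAux.blockU_congr _ (funext fun n => (hU g n).2),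
        PLAux.blockU_one]
  have hBkmem : ∀ g : Γ, Bk g ∈ PLAux.bigM N := fun g =>
    PLAux.blockU_mem (hiso g) (fun n => (W n).mem (g.1 n))
  -- continuity of the strong-operator representation
  have hcontΦ : Continuous (fun g : Γ => (⇑(Bk g) : lp E 2 → lp E 2)) := by
    refine continuous_pi fun v => ?_
    have hFc : ∀ s : Finset ℕ,
        Continuous (fun g : Γ => ∑ n ∈ s, lp.single 2 n (T g n (v n))) := by
      intro s
      refine continuous_finset_sum _ fun n _ => ?_
      have h1 : Continuous (fun g : Γ => g.1 n) :=
        (continuous_apply n).comp continuous_subtype_val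
      have h2 : Continuous (fun w : G n => ((W n).π w) (v n)) :=
        (continuous_apply (v n)).comp (W n).hembedding.continuous
      exact (PLAux.singleCLM (E := E) n).continuous.comp (h2.comp h1)
    have hunif : TendstoUniformly (fun (s : Finset ℕ) (g : Γ) =>
        ∑ n ∈ s, lp.single 2 n (T g n (v n))) (fun g : Γ => Bk g v) Filter.atTop := by
      rw [Metric.tendstoUniformly_iff]
      intro ε hε
      have hsum : Filter.Tendsto (fun s : Finset ℕ => ∑ n ∈ s, lp.single 2 n (v n))
          Filter.atTop (nhds v) := lp.hasSum_single (by norm_num) v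
      rw [Metric.tendsto_nhds] at hsum
      filter_upwards [hsum ε hε] with s hs g
      have h2 : Bk g (∑ n ∈ s, lp.single 2 n (v n)) = ∑ n ∈ s, lp.single 2 n (T g n (v n)) := by
        rw [map_sum]
        exact Finset.sum_congr rfl fun n _ => PLAux.blockU_single (hiso g) n (v n)
      rw [dist_eq_norm, ← h2, ← map_sub, PLAux.blockU_norm, ← dist_eq_norm, dist_comm]
      exact hs
    exact hunif.continuous (Filter.Frequently.of_forall hFc)
  have hkey : ∀ (g : Γ) (n : ℕ) (w : E n), (Bk g (lp.single 2 n w)) n = (W n).π (g.1 n) w := by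
    intro g n w
    rw [hBk, PLAux.blockU_single, lp.single_apply_self]
  have hRcont : ∀ n : ℕ, Continuous (fun p : lp E 2 → lp E 2 =>
      (fun w : E n => (p (lp.single 2 n w)) n : E n → E n)) := by
    intro n
    refine continuous_pi fun w => ?_
    exact (PLAux.evalCLM (E := E) n).continuous.comp (continuous_apply (lp.single 2 n w))
  have hembed : Topology.IsEmbedding (fun g : Γ => (⇑(Bk g) : lp E 2 → lp E 2)) := by
    refine ⟨⟨?_⟩, ?_⟩
    · refine le_antisymm (continuous_iff_le_induced.mp hcontΦ) ?_
      have hsub : (instTopologicalSpaceSubtype : TopologicalSpace Γ)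
          = ⨅ n, TopologicalSpace.induced (fun g : Γ => g.1 n) inferInstance := by
        rw [show (instTopologicalSpaceSubtype : TopologicalSpace Γ)
            = TopologicalSpace.induced (Subtype.val)
              (⨅ n, TopologicalSpace.induced (fun x : ∀ k, G k => x n) inferInstance) from rfl]
        simp only [induced_iInf, induced_compose]
        rfl
      rw [hsub]
      refine le_iInf fun n => ?_
      have e1 : (inferInstance : TopologicalSpace (G n))
          = TopologicalSpace.induced (fun z : G n => (⇑((W n).π z) : E n → E n)) inferInstance :=
        (W n).hembedding.eq_induced
      have comp_eq : (fun g : Γ => (⇑((W n).π (g.1 n)) : E n → E n))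
          = (fun p : lp E 2 → lp E 2 => (fun w : E n => (p (lp.single 2 n w)) n : E n → E n))
            ∘ (fun g : Γ => (⇑(Bk g) : lp E 2 → lp E 2)) := by
        funext g w
        exact (hkey g n w).symm
      calc TopologicalSpace.induced (fun g : Γ => (⇑(Bk g) : lp E 2 → lp E 2)) inferInstance
          ≤ TopologicalSpace.induced (fun g : Γ => (⇑(Bk g) : lp E 2 → lp E 2))
            (TopologicalSpace.induced (fun p : lp E 2 → lp E 2 =>
              (fun w : E n => (p (lp.single 2 n w)) n : E n → E n)) inferInstance) :=
          induced_mono (continuous_iff_le_induced.mp (hRcont n))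
        _ = TopologicalSpace.induced ((fun p : lp E 2 → lp E 2 =>
              (fun w : E n => (p (lp.single 2 n w)) n : E n → E n))
              ∘ (fun g : Γ => (⇑(Bk g) : lp E 2 → lp E 2))) inferInstance := induced_compose
        _ = TopologicalSpace.induced (fun g : Γ => (⇑((W n).π (g.1 n)) : E n → E n))
              inferInstance := by rw [comp_eq]
        _ = TopologicalSpace.induced ((fun z : G n => (⇑((W n).π z) : E n → E n))
              ∘ (fun g : Γ => g.1 n)) inferInstance := rfl
        _ = TopologicalSpace.induced (fun g : Γ => g.1 n)
              (TopologicalSpace.induced (fun z : G n => (⇑((W n).π z) : E n → E n))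
                inferInstance) :=
          (induced_compose (f := fun g : Γ => g.1 n)
            (g := fun z : G n => (⇑((W n).π z) : E n → E n))).symm
        _ = TopologicalSpace.induced (fun g : Γ => g.1 n) inferInstance := by rw [← e1]
    · intro g g' hgg
      apply Subtype.ext
      funext n
      apply (W n).hembedding.injective
      show (⇑((W n).π (g.1 n)) : E n → E n) = ⇑((W n).π (g'.1 n))
      funext w
      have h2 := congrArg (fun z : lp E 2 => (z : ∀ m, E m) n) (congrFun hgg (lp.single 2 n w))
      simp only at h2
      rw [show ((Bk g (lp.single 2 n w) : lp E 2) : ∀ m, E m) n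
          = (Bk g (lp.single 2 n w)) n from rfl, hkey g n w, hkey g' n w] at h2
      exact h2
  have hclosed : IsClosed {p : {fn : lp E 2 → lp E 2 // ∃ u : lp E 2 →L[ℂ] lp E 2,
      u ∈ PLAux.bigM N ∧ u ∈ _root_.unitary (lp E 2 →L[ℂ] lp E 2) ∧ ⇑u = fn} |
      ∃ g : Γ, (⇑(Bk g) : lp E 2 → lp E 2) = ↑p} := by
    set TS := {fn : lp E 2 → lp E 2 // ∃ u : lp E 2 →L[ℂ] lp E 2, u ∈ PLAux.bigM N ∧
        u ∈ _root_.unitary (lp E 2 →L[ℂ] lp E 2) ∧ ⇑u = fn} with hTS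
    set C : Set TS := {p : TS | ∃ g : Γ, (⇑(Bk g) : lp E 2 → lp E 2) = ↑p} with hC
    refine isClosed_of_closure_subset ?_
    intro pt hpt
    obtain ⟨u, huM, huU, hucoe⟩ := pt.2
    -- the block-restriction maps, landing in the witness subtypes
    set r : ∀ n : ℕ, TS → {fn : E n → E n // ∃ a : E n →L[ℂ] E n, a ∈ (W n).M ∧
        a ∈ _root_.unitary (E n →L[ℂ] E n) ∧ ⇑a = fn} := fun n q =>
      ⟨fun w => (q.1 (lp.single 2 n w)) n, by
        obtain ⟨v, hvM, hvU, hvcoe⟩ := q.2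
        refine ⟨PLAux.blockOf v n, PLAux.blockOf_mem hvM n, ?_, ?_⟩
        · obtain ⟨hv1, hv2⟩ := Unitary.mem_iff.mp hvU
          rw [Unitary.mem_iff, ← PLAux.blockOf_star]
          constructor
          · rw [← PLAux.blockOf_mul (star_mem hvM) v n, hv1, PLAux.blockOf_one]
          · rw [← PLAux.blockOf_mul hvM (star v) n, hv2, PLAux.blockOf_one]
        · funext w
          rw [← hvcoe]
          rfl⟩ with hr
    have hrcont : ∀ n, Continuous (r n) := fun n => Continuous.subtype_mk
      (continuous_pi fun w => (PLAux.evalCLM (E := E) n).continuous.comp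
        ((continuous_apply (lp.single 2 n w)).comp continuous_subtype_val)) _
    have hrC : ∀ n : ℕ, (r n) '' C ⊆
        {q | ∃ z : G n, (⇑((W n).π z) : E n → E n) = ↑q} := by
      rintro n q ⟨p', ⟨g, hg⟩, rfl⟩
      refine ⟨g.1 n, ?_⟩
      show (⇑((W n).π (g.1 n)) : E n → E n) = fun w => (p'.1 (lp.single 2 n w)) n
      funext w
      rw [← hg]
      exact (hkey g n w).symm
    have hex : ∀ n : ℕ, ∃ z : G n, (⇑((W n).π z) : E n → E n) = (r n pt).1 := by
      intro n
      have h1 : r n pt ∈ closure ((r n) '' C) :=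
        image_closure_subset_closure_image (hrcont n) (Set.mem_image_of_mem _ hpt)
      have h2 : r n pt ∈ {q : {fn : E n → E n // ∃ a : E n →L[ℂ] E n, a ∈ (W n).M ∧
          a ∈ _root_.unitary (E n →L[ℂ] E n) ∧ ⇑a = fn} |
          ∃ z : G n, (⇑((W n).π z) : E n → E n) = ↑q} :=
        (W n).closed.closure_subset ((closure_mono (hrC n)) h1)
      exact h2
    choose z hz using hex
    -- the filter of approximants
    set Φ' : Γ → TS := fun g => ⟨(⇑(Bk g) : lp E 2 → lp E 2),
      Bk g, hBkmem g, hBkunit g, rfl⟩ with hΦ'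
    set L : Filter Γ := Filter.comap Φ' (nhds pt) with hLdef
    haveI hLne : L.NeBot := by
      rw [hLdef, Filter.comap_neBot_iff]
      intro t ht
      obtain ⟨q, hqt, g, hg⟩ := mem_closure_iff_nhds.mp hpt t ht
      exact ⟨g, by rwa [show Φ' g = q from Subtype.ext hg]⟩
    have hLt : ∀ n, Filter.Tendsto (fun g : Γ => g.1 n) L (nhds (z n)) := by
      intro n
      rw [(W n).hembedding.tendsto_nhds_iff]
      have ht1 : Filter.Tendsto Φ' L (nhds pt) := Filter.tendsto_comap
      have ht2 := ((continuous_subtype_val.comp (hrcont n)).tendsto pt).comp ht1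
      have he : (fun g : Γ => ((r n) (Φ' g)).1) =
          (fun z : G n => (⇑((W n).π z) : E n → E n)) ∘ (fun g : Γ => g.1 n) := by
        funext g w
        exact hkey g n w
      rw [← he, hz n]
      exact ht2
    have hcompat : ∀ (n m : ℕ) (hnm : n ≤ m), j hnm (z m) = z n := by
      intro n m hnm
      have t1 : Filter.Tendsto (fun g : Γ => j hnm (g.1 m)) L (nhds (j hnm (z m))) :=
        ((hcont n m hnm).tendsto _).comp (hLt m)
      have t2 : (fun g : Γ => j hnm (g.1 m)) = fun g : Γ => g.1 n :=
        funext fun g => g.2 n m hnm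
      rw [t2] at t1
      exact tendsto_nhds_unique t1 (hLt n)
    have hmemΓ : (fun n => z n) ∈ Γ := fun n m hnm => hcompat n m hnm
    refine ⟨⟨fun n => z n, hmemΓ⟩, ?_⟩
    have hBz : Bk ⟨fun n => z n, hmemΓ⟩ = u := by
      refine PLAux.eq_of_blockOf (hBkmem _) huM fun n => ?_
      ext w
      rw [PLAux.blockOf_apply, PLAux.blockOf_apply]
      rw [hkey ⟨fun n => z n, hmemΓ⟩ n w]
      have h3 := congrFun (hz n) w
      rw [h3]
      show (pt.1 (lp.single 2 n w)) n = (u (lp.single 2 n w)) n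
      rw [← hucoe]
    rw [hBz]
    exact hucoe
  exact ⟨{ H := lp E 2
           nacg := inferInstance
           ips := inferInstance
           cs := inferInstance
           M := PLAux.bigM N
           finite := fun x hx h => PLAux.bigM_finite
             (fun n a ha h1 => (W n).finite a ha h1) x hx h
           π := { toFun := Bk, map_one' := hBkone, map_mul' := hBkmul }
           mem := hBkmem
           unitary := hBkunit
           hembedding := hembed
           closed := hclosed }⟩
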